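/- Let K = ℚ(p_i^{1/d_i} : i ∈ ℕ), where (p_i) and (d_i) are sequences of primes with min{p_{i+1}, d_{i+1}} > max{p_i, d_i} for all i, and such that the ring of integers of ℚ(p_i^{1/d_i}) is ℤ[p_i^{1/d_i}] for each i. Then the ring of integers of K is the union over i of ℤ[p_1^{1/d_1}, ..., p_i^{1/d_i}]. -/

import Mathlib

open Polynomial IntermediateField

noncomputable section

set_option maxHeartbeats 2000000
set_option synthInstance.maxHeartbeats 400000

namespace Stmt16

lemma rat_pow_ne_prime {pp dd : ℕ} (hp : pp.Prime) (hd : dd.Prime) (q : ℚ) :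
    q ^ dd ≠ (pp : ℚ) := by
  intro h
  have hint : IsIntegral ℤ q := by
    refine ⟨X ^ dd - C (pp : ℤ), monic_X_pow_sub_C _ hd.ne_zero, ?_⟩
    simp [h]
  obtain ⟨y, hy⟩ := IsIntegrallyClosed.isIntegral_iff.mp hint
  have hyq : (y : ℚ) = q := by exact_mod_cast hy
  have hZ : y ^ dd = (pp : ℤ) := by
    have := h
    rw [← hyq] at this
    exact_mod_cast this
  have hN : y.natAbs ^ dd = pp := by
    have := congrArg Int.natAbs hZ
    simpa [Int.natAbs_pow] using this
  exact hd.ne_one (hp.pow_eq_iff.mp hN).2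

lemma irr_X_pow_sub_C {pp dd : ℕ} (hp : pp.Prime) (hd : dd.Prime) :
    Irreducible (X ^ dd - C (pp : ℚ)) :=
  X_pow_sub_C_irreducible_of_prime hd (fun b => rat_pow_ne_prime hp hd b)

lemma xi_integral {pp dd : ℕ} (hd : dd ≠ 0) {u : ℂ} (hu : u ^ dd = (pp : ℂ)) :
    IsIntegral ℤ u := by
  refine ⟨X ^ dd - C (pp : ℤ), monic_X_pow_sub_C _ hd, ?_⟩
  simp [hu]

lemma minpoly_xi_rat {pp dd : ℕ} (hp : pp.Prime) (hd : dd.Prime) {u : ℂ}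
    (hu : u ^ dd = (pp : ℂ)) : minpoly ℚ u = X ^ dd - C (pp : ℚ) := by
  have h0 : (aeval u) (X ^ dd - C (pp:ℚ)) = 0 := by simp [hu]
  exact (minpoly.eq_of_irreducible_of_monic (irr_X_pow_sub_C hp hd) h0
    (monic_X_pow_sub_C _ hd.ne_zero)).symm

lemma finrank_Q_adjoin_xi {pp dd : ℕ} (hp : pp.Prime) (hd : dd.Prime) {u : ℂ}
    (hu : u ^ dd = (pp : ℂ)) :
    Module.finrank ℚ ℚ⟮u⟯ = dd := by
  rw [adjoin.finrank ((xi_integral hd.ne_zero hu).tower_top (A := ℚ)),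
    minpoly_xi_rat hp hd hu]
  exact natDegree_X_pow_sub_C


lemma minpoly_step {pp dd : ℕ} (hp : pp.Prime) (hd : dd.Prime) {u : ℂ}
    (hu : u ^ dd = (pp : ℂ)) (F : IntermediateField ℚ ℂ) [FiniteDimensional ℚ F]
    (hndvd : ¬ (dd ∣ Module.finrank ℚ F)) :
    minpoly F u = X ^ dd - C (pp : F) := by
  have hint : IsIntegral F u := (xi_integral hd.ne_zero hu).tower_top
  have hroot : (aeval u) (X ^ dd - C (pp : F)) = 0 := by
    simp [hu]
  have hdvd : minpoly F u ∣ X ^ dd - C (pp : F) := minpoly.dvd F u hroot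
  have hmonic : (X ^ dd - C (pp : F)).Monic := monic_X_pow_sub_C _ hd.ne_zero
  have hle : (minpoly F u).natDegree ≤ dd := by
    have := Polynomial.natDegree_le_of_dvd hdvd hmonic.ne_zero
    rwa [natDegree_X_pow_sub_C] at this
  have hle2 : ℚ⟮u⟯ ≤ F⟮u⟯.restrictScalars ℚ := by
    rw [IntermediateField.adjoin_le_iff]
    intro z hz
    rcases hz with rfl
    exact (IntermediateField.mem_restrictScalars ℚ).mpr (IntermediateField.mem_adjoin_simple_self F z)
  have hddE : dd ∣ Module.finrank ℚ (F⟮u⟯.restrictScalars ℚ) := by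
    have h1 := IntermediateField.finrank_bot_mul_relfinrank hle2
    rw [finrank_Q_adjoin_xi hp hd hu] at h1
    exact Dvd.intro _ h1
  have hfrE : Module.finrank ℚ (F⟮u⟯.restrictScalars ℚ)
      = Module.finrank ℚ F * Module.finrank F F⟮u⟯ :=
    (Module.finrank_mul_finrank ℚ F F⟮u⟯).symm
  have hdeg_eq : Module.finrank F F⟮u⟯ = (minpoly F u).natDegree := adjoin.finrank hint
  have hdd_dvd : dd ∣ (minpoly F u).natDegree := by
    rw [hfrE, hdeg_eq] at hddE
    rcases (Nat.Prime.dvd_mul hd).mp hddE with h | h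
    · exact absurd h hndvd
    · exact h
  have hdegpos : 0 < (minpoly F u).natDegree := minpoly.natDegree_pos hint
  have hdeg : dd ≤ (minpoly F u).natDegree := Nat.le_of_dvd hdegpos hdd_dvd
  have := eq_of_monic_of_dvd_of_natDegree_le (minpoly.monic hint) hmonic hdvd
    (by rw [natDegree_X_pow_sub_C]; exact hdeg)
  exact this.symm


lemma step {pp dd : ℕ} (hp : pp.Prime) (hd : dd.Prime) {u : ℂ}
    (hu : u ^ dd = (pp : ℂ)) (F : IntermediateField ℚ ℂ) [FiniteDimensional ℚ F]
    (hndvd : ¬ (dd ∣ Module.finrank ℚ F))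
    (A : Subalgebra ℤ ℂ) (c : ℤ)
    (hA : ∀ y ∈ F, IsIntegral ℤ y → c • y ∈ A) :
    Module.finrank ℚ (F⟮u⟯.restrictScalars ℚ) = Module.finrank ℚ F * dd ∧
    ∀ y ∈ F⟮u⟯.restrictScalars ℚ, IsIntegral ℤ y →
      (((dd : ℤ) ^ dd * (pp : ℤ) ^ (dd - 1)) * c) • y ∈ Algebra.adjoin ℤ ((A : Set ℂ) ∪ {u}) := by
  have hintZ : IsIntegral ℤ u := xi_integral hd.ne_zero hu
  have hint : IsIntegral F u := hintZ.tower_top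
  have hmin := minpoly_step hp hd hu F hndvd
  have hdim : Module.finrank F F⟮u⟯ = dd := by
    rw [adjoin.finrank hint, hmin, natDegree_X_pow_sub_C]
  have hfr : Module.finrank ℚ (F⟮u⟯.restrictScalars ℚ) = Module.finrank ℚ F * dd := by
    rw [← hdim]
    exact (Module.finrank_mul_finrank ℚ F F⟮u⟯).symm
  refine ⟨hfr, ?_⟩
  set R := integralClosure ℤ F with hR
  letI : IsFractionRing R F := integralClosure.isFractionRing_of_finite_extension ℚ F
  letI : IsIntegrallyClosed R := integralClosure.isIntegrallyClosedOfFiniteExtension ℚ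
  set B : PowerBasis F F⟮u⟯ := adjoin.powerBasis hint with hB
  have hBgen : B.gen = AdjoinSimple.gen F u := adjoin.powerBasis_gen hint
  have hvalgen : (F⟮u⟯.val) B.gen = u := by rw [hBgen]; exact AdjoinSimple.algebraMap_gen F u
  have hgenZ : IsIntegral ℤ B.gen := by
    rw [show B.gen = (⟨u, by rw [← hvalgen]; exact (B.gen).2⟩ : F⟮u⟯) from by
      ext; exact hvalgen]
    exact (isIntegral_algHom_iff (F⟮u⟯.val.restrictScalars ℤ) Subtype.val_injective).mp
      (by exact hintZ)
  have hgenR : IsIntegral R B.gen := hgenZ.tower_top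
  -- minpoly of gen
  have hgen_min : minpoly F B.gen = X ^ dd - C (pp : F) := by
    rw [hBgen, IntermediateField.minpoly_gen, hmin]
  haveI : FiniteDimensional (↥F) (↥F)⟮u⟯ := adjoin.finiteDimensional hint
  haveI : CharZero (↥F) := charZero_of_injective_algebraMap (algebraMap ℚ F).injective
  -- derivative evaluation
  have hder : aeval B.gen (derivative (minpoly F B.gen)) = (dd : F⟮u⟯) * B.gen ^ (dd - 1) := by
    rw [hgen_min]
    simp [derivative_X_pow]
  have hnormgen : Algebra.norm F B.gen = (-1 : F) ^ B.dim * (-(pp : F)) := by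
    rw [Algebra.PowerBasis.norm_gen_eq_coeff_zero_minpoly, hgen_min]
    simp only [coeff_sub, coeff_X_pow, coeff_C_zero,
      if_neg (show ¬ (0 = dd) from fun h => hd.ne_zero h.symm)]
    ring
  have hnormdd : Algebra.norm F ((dd : ℕ) : F⟮u⟯) = (dd : F) ^ dd := by
    rw [show ((dd : ℕ) : F⟮u⟯) = algebraMap F F⟮u⟯ ((dd : ℕ) : F) by push_cast; simp,
      Algebra.norm_algebraMap, hdim]
  have hnorm : Algebra.norm F ((dd : F⟮u⟯) * B.gen ^ (dd - 1)) =
      (dd : F) ^ dd * ((-1 : F) ^ B.dim * (-(pp : F))) ^ (dd - 1) := by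
    rw [map_mul, map_pow, hnormgen, hnormdd]
  have hD : Algebra.discr F B.basis =
      ((-1 : F) ^ (B.dim * (B.dim - 1) / 2 + (B.dim + 1) * (dd - 1))) *
        ((dd : F) ^ dd * (pp : F) ^ (dd - 1)) := by
    rw [Algebra.discr_powerBasis_eq_norm, B.finrank, hder, hnorm, pow_add, pow_mul, pow_succ]
    ring
  have heps : ((-1 : F) ^ (B.dim * (B.dim - 1) / 2 + (B.dim + 1) * (dd - 1))) = 1 ∨
      ((-1 : F) ^ (B.dim * (B.dim - 1) / 2 + (B.dim + 1) * (dd - 1))) = -1 := by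
    rcases Nat.even_or_odd (B.dim * (B.dim - 1) / 2 + (B.dim + 1) * (dd - 1)) with h | h
    · left; exact h.neg_one_pow
    · right; exact h.neg_one_pow
  have hMz : ∀ z : F⟮u⟯, IsIntegral R z →
      ((dd : ℤ) ^ dd * (pp : ℤ) ^ (dd - 1)) • z ∈ Algebra.adjoin R {B.gen} := by
    intro z hz
    have h1 := Algebra.discr_mul_isIntegral_mem_adjoin (K := F) hgenR hz
    rw [hD] at h1
    have hcast : (((dd : ℤ) ^ dd * (pp : ℤ) ^ (dd - 1)) : ℤ) • z
        = ((dd : F) ^ dd * (pp : F) ^ (dd - 1)) • z := by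
      rw [show ((dd : F) ^ dd * (pp : F) ^ (dd - 1))
          = (((dd : ℤ) ^ dd * (pp : ℤ) ^ (dd - 1) : ℤ) : F) by push_cast; ring]
      exact (Int.cast_smul_eq_zsmul F _ z).symm
    rcases heps with h | h
    · rw [h, one_mul] at h1
      rw [hcast]; exact h1
    · rw [h] at h1
      rw [hcast]
      have : ((dd : F) ^ dd * (pp : F) ^ (dd - 1)) • z
          = -((-1 * ((dd : F) ^ dd * (pp : F) ^ (dd - 1))) • z) := by
        rw [← neg_smul]; ring_nf
      rw [this]
      exact neg_mem h1
  intro y hy hyint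
  set z : (↥F)⟮u⟯ := ⟨y, hy⟩ with hz
  have hzy : (F⟮u⟯.val) z = y := rfl
  have hzint : IsIntegral ℤ z :=
    (isIntegral_algHom_iff (F⟮u⟯.val.restrictScalars ℤ) Subtype.val_injective).mp
      (by exact hyint)
  have hzR : IsIntegral R z := hzint.tower_top
  have h2 := hMz z hzR
  rw [Algebra.adjoin_singleton_eq_range_aeval] at h2
  obtain ⟨P, hP'⟩ := h2
  have hP : (aeval B.gen) P = ((dd : ℤ) ^ dd * (pp : ℤ) ^ (dd - 1)) • z := hP'
  -- push everything down to ℂ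
  have hexp : ((dd : ℤ) ^ dd * (pp : ℤ) ^ (dd - 1)) • y =
      ∑ i ∈ Finset.range (P.natDegree + 1), (((P.coeff i : ↥F) : ℂ)) * u ^ i := by
    have h3 : (F⟮u⟯.val) (((dd : ℤ) ^ dd * (pp : ℤ) ^ (dd - 1)) • z)
        = ((dd : ℤ) ^ dd * (pp : ℤ) ^ (dd - 1)) • y := by
      rw [map_zsmul]; rfl
    rw [← h3, ← hP, Polynomial.aeval_eq_sum_range, map_sum]
    refine Finset.sum_congr rfl fun i _ => ?_
    rw [Algebra.smul_def, map_mul, map_pow, hvalgen]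
    congr 1
  have goal_eq : ((((dd : ℤ) ^ dd * (pp : ℤ) ^ (dd - 1)) * c) • y)
      = ∑ i ∈ Finset.range (P.natDegree + 1), (c • (((P.coeff i : ↥F) : ℂ))) * u ^ i := by
    rw [mul_comm, mul_smul, hexp, Finset.smul_sum]
    refine Finset.sum_congr rfl fun i _ => ?_
    rw [smul_mul_assoc]
  rw [goal_eq]
  refine Subalgebra.sum_mem _ fun i _ => ?_
  have hcoeffF : ((P.coeff i : ↥F) : ℂ) ∈ F := (P.coeff i : ↥F).2
  have hcoeffint : IsIntegral ℤ (((P.coeff i : ↥F) : ℂ)) := by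
    have h4 : IsIntegral ℤ (P.coeff i : ↥F) := (P.coeff i).2
    exact h4.map (F.val.restrictScalars ℤ)
  have hmemA : c • (((P.coeff i : ↥F) : ℂ)) ∈ A := hA _ hcoeffF hcoeffint
  refine mul_mem (Algebra.subset_adjoin (Set.mem_union_left _ hmemA)) ?_
  exact pow_mem (Algebra.subset_adjoin (Set.mem_union_right _ (Set.mem_singleton u))) i


lemma sep_lemma (p d : ℕ → ℕ)
    (hmono : ∀ i, max (p i) (d i) < min (p (i + 1)) (d (i + 1))) :
    ∀ i t, i < t → max (p i) (d i) < min (p t) (d t) := by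
  intro i t h
  induction t with
  | zero => omega
  | succ t ih =>
      rcases Nat.lt_succ_iff_lt_or_eq.mp h with h' | h'
      · calc max (p i) (d i) < min (p t) (d t) := ih h'
          _ ≤ max (p t) (d t) := (min_le_left _ _).trans (le_max_left _ _)
          _ < min (p (t+1)) (d (t+1)) := hmono t
      · subst h'; exact hmono i

lemma values_disjoint (p d : ℕ → ℕ)
    (hmono : ∀ i, max (p i) (d i) < min (p (i + 1)) (d (i + 1)))
    {i t : ℕ} (hne : i ≠ t) {q : ℕ} (hqi : q = p i ∨ q = d i) (hqt : q = p t ∨ q = d t) :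
    False := by
  have key : ∀ a b : ℕ, a < b → ∀ {q : ℕ}, (q = p a ∨ q = d a) → (q = p b ∨ q = d b) → False := by
    intro a b hab q h1 h2
    have h3 := sep_lemma p d hmono a b hab
    have h4 : q ≤ max (p a) (d a) := by
      rcases h1 with rfl | rfl
      · exact le_max_left _ _
      · exact le_max_right _ _
    have h5 : min (p b) (d b) ≤ q := by
      rcases h2 with rfl | rfl
      · exact min_le_left _ _
      · exact min_le_right _ _
    omega
  rcases Nat.lt_or_ge i t with h | h
  · exact key i t h hqi hqt
  · exact key t i (by omega) hqt hqi

lemma d_inj (p d : ℕ → ℕ)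
    (hmono : ∀ i, max (p i) (d i) < min (p (i + 1)) (d (i + 1)))
    {i t : ℕ} (h : d i = d t) : i = t := by
  by_contra hne
  exact values_disjoint p d hmono hne (Or.inr rfl) (Or.inr (by omega))


lemma peel (p d : ℕ → ℕ) (hp : ∀ i, (p i).Prime) (hd : ∀ i, (d i).Prime)
    (ξ : ℕ → ℂ) (hξ : ∀ i, ξ i ^ d i = (p i : ℂ))
    (T₀ : Set ℂ) (hT₀fin : T₀.Finite) (hT₀int : ∀ x ∈ T₀, IsIntegral ℤ x)
    (A₀ : Subalgebra ℤ ℂ) (c₀ : ℤ) (D₀ : ℕ)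
    (hA₀ : ∀ y ∈ IntermediateField.adjoin ℚ T₀, IsIntegral ℤ y → c₀ • y ∈ A₀)
    (hD₀ : Module.finrank ℚ (IntermediateField.adjoin ℚ T₀) ∣ D₀)
    (S : Finset ℕ) :
    (∀ i ∈ S, ¬ (d i ∣ D₀)) → (∀ i ∈ S, ∀ t ∈ S, d i = d t → i = t) →
    (Module.finrank ℚ (IntermediateField.adjoin ℚ (T₀ ∪ ξ '' ↑S)) ∣ D₀ * ∏ i ∈ S, d i ∧
    ∀ y ∈ IntermediateField.adjoin ℚ (T₀ ∪ ξ '' ↑S), IsIntegral ℤ y →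
      ((∏ i ∈ S, ((d i : ℤ) ^ (d i) * (p i : ℤ) ^ (d i - 1))) * c₀) • y
        ∈ Algebra.adjoin ℤ ((A₀ : Set ℂ) ∪ ξ '' ↑S)) := by
  classical
  induction S using Finset.induction_on with
  | empty =>
      intro _ _
      have hTe : T₀ ∪ ξ '' ↑(∅ : Finset ℕ) = T₀ := by simp
      rw [hTe]
      simp only [Finset.prod_empty, one_mul, mul_one]
      refine ⟨hD₀, fun y hy hyint => Algebra.subset_adjoin ?_⟩
      have h0 := hA₀ y hy hyint
      simp only [Finset.coe_empty, Set.image_empty, Set.union_empty]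
      exact h0
  | @insert i S hi ih =>
      intro hfresh hdist
      obtain ⟨ihfr, ihmem⟩ := ih (fun t ht => hfresh t (Finset.mem_insert_of_mem ht))
        (fun a ha b hb => hdist a (Finset.mem_insert_of_mem ha) b (Finset.mem_insert_of_mem hb))
      set F₁ := IntermediateField.adjoin ℚ (T₀ ∪ ξ '' ↑S) with hF₁
      haveI : Finite ↥(T₀ ∪ ξ '' ↑S) := (hT₀fin.union (S.finite_toSet.image ξ)).to_subtype
      haveI : FiniteDimensional ℚ F₁ := IntermediateField.finiteDimensional_adjoin
        (fun x hx => by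
          rcases hx with hx | ⟨t, _, rfl⟩
          · exact (hT₀int x hx).tower_top
          · exact (xi_integral (hd t).ne_zero (hξ t)).tower_top)
      have hndvd : ¬ ((d i) ∣ Module.finrank ℚ F₁) := by
        intro hcon
        have h2 : (d i) ∣ D₀ * ∏ t ∈ S, d t := hcon.trans ihfr
        rcases (Nat.Prime.dvd_mul (hd i)).mp h2 with h3 | h3
        · exact hfresh i (Finset.mem_insert_self i S) h3
        · obtain ⟨t, ht, h4⟩ := ((hd i).prime.dvd_finset_prod_iff _).mp h3
          have : d i = d t := ((Nat.prime_dvd_prime_iff_eq (hd i) (hd t)).mp h4)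
          have := hdist i (Finset.mem_insert_self i S) t (Finset.mem_insert_of_mem ht) this
          exact hi (this ▸ ht)
      obtain ⟨hfr', hmem'⟩ := step (hp i) (hd i) (hξ i) F₁ hndvd
        (Algebra.adjoin ℤ ((A₀ : Set ℂ) ∪ ξ '' ↑S))
        ((∏ t ∈ S, ((d t : ℤ) ^ (d t) * (p t : ℤ) ^ (d t - 1))) * c₀) ihmem
      have hfield : (F₁⟮ξ i⟯).restrictScalars ℚ
          = IntermediateField.adjoin ℚ (T₀ ∪ ξ '' ↑(insert i S)) := by
        rw [hF₁]
        erw [IntermediateField.adjoin_adjoin_left]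
        congr 1
        rw [Finset.coe_insert, Set.image_insert_eq, Set.union_singleton]
        ext w
        simp only [Set.mem_union, Set.mem_insert_iff]
        tauto
      have hset : (A₀ : Set ℂ) ∪ ξ '' ↑(insert i S) = ((A₀ : Set ℂ) ∪ ξ '' ↑S) ∪ {ξ i} := by
        rw [Finset.coe_insert, Set.image_insert_eq, ← Set.union_singleton, Set.union_assoc]
      have halg : Algebra.adjoin ℤ ((↑(Algebra.adjoin ℤ ((A₀ : Set ℂ) ∪ ξ '' ↑S)) : Set ℂ) ∪ {ξ i})
          = Algebra.adjoin ℤ ((A₀ : Set ℂ) ∪ ξ '' ↑(insert i S)) := by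
        rw [hset, Algebra.adjoin_union, Algebra.adjoin_eq, ← Algebra.adjoin_union]
      refine ⟨?_, ?_⟩
      · rw [← hfield, hfr']
        have h5 : Module.finrank ℚ F₁ * d i ∣ (D₀ * ∏ t ∈ S, d t) * d i :=
          mul_dvd_mul_right ihfr _
        rwa [show (D₀ * ∏ t ∈ S, d t) * d i = D₀ * ∏ t ∈ insert i S, d t by
          rw [Finset.prod_insert hi]; ring] at h5
      · intro y hy hyint
        rw [← hfield] at hy
        have h6 := hmem' y hy hyint
        rw [halg] at h6
        rwa [Finset.prod_insert hi, mul_assoc]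


end Stmt16

open Stmt16

/-- Let `(p_i)`, `(d_i)` be primes with `min{p_{i+1}, d_{i+1}} > max{p_i, d_i}`,
`ξ_i` a `d_i`-th root of `p_i`, and suppose the ring of integers of `ℚ(ξ_i)` is `ℤ[ξ_i]` for
each `i`. Then the ring of integers of `K = ℚ(ξ_0, ξ_1, …)` is `⋃_i ℤ[ξ_0, …, ξ_i]`:
an element `x ∈ K` is integral over `ℤ` iff `x ∈ ℤ[ξ_0, …, ξ_i]` for some `i`. -/
theorem stmt16 (p d : ℕ → ℕ) (hp : ∀ i, (p i).Prime) (hd : ∀ i, (d i).Prime)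
    (hmono : ∀ i, max (p i) (d i) < min (p (i + 1)) (d (i + 1)))
    (ξ : ℕ → ℂ) (hξ : ∀ i, ξ i ^ d i = (p i : ℂ))
    (hOi : ∀ i, ∀ x ∈ IntermediateField.adjoin ℚ {ξ i},
      IsIntegral ℤ x → x ∈ Algebra.adjoin ℤ {ξ i}) :
    ∀ x ∈ IntermediateField.adjoin ℚ (Set.range ξ),
      (IsIntegral ℤ x ↔ ∃ i, x ∈ Algebra.adjoin ℤ (ξ '' Set.Iic i)) := by
  classical
  intro x hx
  constructor
  · intro hint
    obtain ⟨T, hTsub, hxT⟩ := IntermediateField.exists_finset_of_mem_adjoin hx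
    have hex : ∀ t ∈ T, ∃ i, ξ i = t := fun t ht => hTsub ht
    choose g hg using hex
    set n := T.attach.sup (fun t => g t.1 t.2) with hn
    have hxn : x ∈ IntermediateField.adjoin ℚ (ξ '' Set.Iic n) := by
      refine IntermediateField.adjoin.mono ℚ _ _ ?_ hxT
      intro t ht
      exact ⟨g t ht, Set.mem_Iic.mpr (Finset.le_sup (f := fun t : {y // y ∈ T} => g t.1 t.2) (Finset.mem_attach T ⟨t, ht⟩)), hg t ht⟩
    set A := Algebra.adjoin ℤ (ξ '' Set.Iic n) with hA
    set M : ℕ → ℤ := fun i => (d i : ℤ) ^ (d i) * (p i : ℤ) ^ (d i - 1) with hM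
    have hIic : (↑(Finset.Iic n) : Set ℕ) = Set.Iic n := Finset.coe_Iic n
    -- base field ℚ facts
    have hbotA : ∀ y ∈ IntermediateField.adjoin ℚ (∅ : Set ℂ), IsIntegral ℤ y →
        (1 : ℤ) • y ∈ (⊥ : Subalgebra ℤ ℂ) := by
      intro y hy hyint
      rw [IntermediateField.adjoin_empty] at hy
      obtain ⟨r, hr⟩ := IntermediateField.mem_bot.mp hy
      rw [← hr] at hyint ⊢
      have hrint : IsIntegral ℤ r :=
        (isIntegral_algebraMap_iff (algebraMap ℚ ℂ).injective).mp hyint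
      obtain ⟨k, hk⟩ := IsIntegrallyClosed.isIntegral_iff.mp hrint
      rw [one_smul]
      exact Algebra.mem_bot.mpr ⟨k, by rw [IsScalarTower.algebraMap_apply ℤ ℚ ℂ, hk]⟩
    have hdistAll : ∀ (S : Finset ℕ), ∀ i ∈ S, ∀ t ∈ S, d i = d t → i = t :=
      fun _ i _ t _ h => d_inj p d hmono h
    -- multiplier m₀
    obtain ⟨-, hm₀⟩ := peel p d hp hd ξ hξ ∅ Set.finite_empty (by simp) ⊥ 1 1
      hbotA (by rw [IntermediateField.adjoin_empty]; simp) (Finset.Iic n)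
      (fun i _ hcon => (hd i).ne_one (Nat.dvd_one.mp hcon)) (hdistAll _)
    have hm₀x : (∏ i ∈ Finset.Iic n, M i) • x ∈ A := by
      have h1 := hm₀ x (by rw [Set.empty_union, hIic]; exact hxn) hint
      rw [mul_one] at h1
      have h2 : Algebra.adjoin ℤ ((↑(⊥ : Subalgebra ℤ ℂ) : Set ℂ) ∪ ξ '' ↑(Finset.Iic n)) = A := by
        rw [Algebra.adjoin_union, Algebra.adjoin_eq, bot_sup_eq, hIic]
      rwa [h2] at h1
    -- per-prime claim
    have hclaim : ∀ q : ℕ, q.Prime → ∃ m : ℤ, m • x ∈ A ∧ ¬ ((q : ℤ) ∣ m) := by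
      intro q hq
      have hqZ : Prime (q : ℤ) := Int.prime_iff_natAbs_prime.mpr (by simpa using hq)
      have hdvdMval : ∀ i, ((q : ℤ) ∣ M i) → (q = p i ∨ q = d i) := by
        intro i hdvd
        rcases hqZ.dvd_mul.mp hdvd with h | h
        · right
          have := hqZ.dvd_of_dvd_pow h
          have : q ∣ d i := Int.natCast_dvd_natCast.mp this
          exact ((Nat.prime_dvd_prime_iff_eq hq (hd i)).mp this)
        · left
          have := hqZ.dvd_of_dvd_pow h
          have : q ∣ p i := Int.natCast_dvd_natCast.mp this
          exact ((Nat.prime_dvd_prime_iff_eq hq (hp i)).mp this)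
      by_cases hcase : ∃ j, j ≤ n ∧ (q = p j ∨ q = d j)
      · obtain ⟨j, hjn, hqj⟩ := hcase
        have hbase : ∀ y ∈ IntermediateField.adjoin ℚ ({ξ j} : Set ℂ), IsIntegral ℤ y →
            (1 : ℤ) • y ∈ Algebra.adjoin ℤ ({ξ j} : Set ℂ) := by
          intro y hy hyint
          rw [one_smul]
          exact hOi j y hy hyint
        have hDbase : Module.finrank ℚ (IntermediateField.adjoin ℚ ({ξ j} : Set ℂ)) ∣ d j :=
          dvd_of_eq (finrank_Q_adjoin_xi (hp j) (hd j) (hξ j))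
        set S := (Finset.Iic n).erase j with hS
        obtain ⟨-, hm₁⟩ := peel p d hp hd ξ hξ {ξ j} (Set.finite_singleton _)
          (by rintro z rfl; exact xi_integral (hd j).ne_zero (hξ j))
          (Algebra.adjoin ℤ {ξ j}) 1 (d j) hbase hDbase S
          (fun i hiS hcon => by
            have h3 : d i = d j := (Nat.prime_dvd_prime_iff_eq (hd i) (hd j)).mp hcon
            exact (Finset.ne_of_mem_erase hiS) (d_inj p d hmono h3))
          (hdistAll _)
        have hsetT : ({ξ j} : Set ℂ) ∪ ξ '' ↑S = ξ '' Set.Iic n := by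
          rw [← Set.insert_eq, ← Set.image_insert_eq, ← Finset.coe_insert,
            Finset.insert_erase (Finset.mem_Iic.mpr hjn), Finset.coe_Iic]
        refine ⟨∏ i ∈ S, M i, ?_, ?_⟩
        · have h1 := hm₁ x (by rw [hsetT]; exact hxn) hint
          rw [mul_one] at h1
          have h2 : Algebra.adjoin ℤ
              ((↑(Algebra.adjoin ℤ ({ξ j} : Set ℂ)) : Set ℂ) ∪ ξ '' ↑S) = A := by
            rw [Algebra.adjoin_union, Algebra.adjoin_eq, ← Algebra.adjoin_union, hsetT]
          rwa [h2] at h1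
        · intro hdvd
          obtain ⟨i, hiS, hidvd⟩ := (hqZ.dvd_finset_prod_iff _).mp hdvd
          exact values_disjoint p d hmono (Finset.ne_of_mem_erase hiS)
            (hdvdMval i hidvd) hqj
      · refine ⟨∏ i ∈ Finset.Iic n, M i, hm₀x, ?_⟩
        intro hdvd
        obtain ⟨i, hiS, hidvd⟩ := (hqZ.dvd_finset_prod_iff _).mp hdvd
        exact hcase ⟨i, Finset.mem_Iic.mp hiS, hdvdMval i hidvd⟩
    -- the ideal of multipliers
    let I : Ideal ℤ :=
      { carrier := {m : ℤ | m • x ∈ A}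
        add_mem' := fun {a b} ha hb => by
          simp only [Set.mem_setOf_eq, add_smul] at *
          exact add_mem ha hb
        zero_mem' := by
          simp only [Set.mem_setOf_eq, zero_smul]
          exact zero_mem A
        smul_mem' := fun c m hm => by
          simp only [Set.mem_setOf_eq, smul_eq_mul, mul_smul] at *
          exact Subalgebra.smul_mem A hm c }
    have hm₀I : (∏ i ∈ Finset.Iic n, M i) ∈ I := hm₀x
    have hm₀ne : (∏ i ∈ Finset.Iic n, M i) ≠ 0 := by
      rw [Finset.prod_ne_zero_iff]
      intro i _
      have h1 : ((d i : ℤ)) ≠ 0 := by exact_mod_cast (hd i).ne_zero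
      have h2 : ((p i : ℤ)) ≠ 0 := by exact_mod_cast (hp i).ne_zero
      exact mul_ne_zero (pow_ne_zero _ h1) (pow_ne_zero _ h2)
    obtain ⟨gen, hgen⟩ := (IsPrincipalIdealRing.principal I).principal
    have hgen_ne : gen ≠ 0 := by
      rintro rfl
      rw [hgen, Submodule.span_zero_singleton] at hm₀I
      exact hm₀ne (by simpa using hm₀I)
    have hgen_unit : IsUnit gen := by
      rw [Int.isUnit_iff_natAbs_eq]
      by_contra hne1
      obtain ⟨q, hq, hqdvd⟩ := Nat.exists_prime_and_dvd hne1
      obtain ⟨m, hmA, hmq⟩ := hclaim q hq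
      have hmI : m ∈ I := hmA
      rw [hgen, Ideal.submodule_span_eq, Ideal.mem_span_singleton] at hmI
      have : (q : ℤ) ∣ gen := (Int.natCast_dvd_natCast.mpr hqdvd).trans
        (Int.natAbs_dvd.mpr dvd_rfl)
      exact hmq (this.trans hmI)
    have h1I : (1 : ℤ) ∈ I := by
      rw [hgen, Ideal.submodule_span_eq, Ideal.span_singleton_eq_top.mpr hgen_unit]
      exact Submodule.mem_top
    have : (1 : ℤ) • x ∈ A := h1I
    rw [one_smul] at this
    exact ⟨n, this⟩
  · rintro ⟨i, hxi⟩
    refine Algebra.adjoin_induction ?_ ?_ ?_ ?_ hxi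
    · rintro w ⟨t, -, rfl⟩
      exact xi_integral (hd t).ne_zero (hξ t)
    · exact fun r => isIntegral_algebraMap
    · exact fun a b _ _ ha hb => ha.add hb
    · exact fun a b _ _ ha hb => ha.mul hb
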